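/- arXiv:2407.13612 — 4 statements merged into one kernel-verified Lean document; each statement's English description precedes it below -/
import Mathlib

section
/- Let G be a multigraph with vertices partitioned into free and fixed vertices, and let 0 ≤ m ≤ 2 and 0 ≤ l ≤ 3. Suppose v is a free vertex of degree 3 with no incident loops, and suppose G is (2,m,l)-sparse, i.e. every subgraph H satisfies |E(H)| ≤ 2|V̄(H)| + m|V₀(H)| − l. Then G − v has no (2,m,l)-tight subgraph containing all neighbours of v. -/
open scoped Classical

structure Multigraph (α β : Type*) where
  V : Finset α
  E : Finset β
  fst : β → α
  snd : β → α
  fixed : Finset α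
  fixed_sub : fixed ⊆ V
  fst_mem : ∀ e ∈ E, fst e ∈ V
  snd_mem : ∀ e ∈ E, snd e ∈ V

namespace Multigraph

variable {α β : Type*} [DecidableEq α] [DecidableEq β]

/-- The free vertices of the multigraph. -/
def freeV (G : Multigraph α β) : Finset α := G.V \ G.fixed

/-- The degree of a vertex: each loop contributes 2. -/
def deg (G : Multigraph α β) (v : α) : ℕ :=
  (G.E.filter (fun e => G.fst e = v)).card + (G.E.filter (fun e => G.snd e = v)).card

/-- The neighbours of a vertex. -/
def nbrs (G : Multigraph α β) (v : α) : Finset α :=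
  ((G.E.filter (fun e => G.fst e = v)).image G.snd) ∪
    ((G.E.filter (fun e => G.snd e = v)).image G.fst)

/-- A subgraph of a multigraph. -/
structure Subgraph (G : Multigraph α β) where
  V : Finset α
  E : Finset β
  V_sub : V ⊆ G.V
  E_sub : E ⊆ G.E
  fst_mem : ∀ e ∈ E, G.fst e ∈ V
  snd_mem : ∀ e ∈ E, G.snd e ∈ V

/-- The free vertices of a subgraph. -/
def Subgraph.freeV {G : Multigraph α β} (H : Subgraph G) : Finset α := H.V \ G.fixed

/-- The fixed vertices of a subgraph. -/
def Subgraph.fixedV {G : Multigraph α β} (H : Subgraph G) : Finset α := H.V ∩ G.fixed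

/-- The sparsity count `2|V̄(H)| + m|V₀(H)| - l` of a subgraph, as an integer. -/
def Subgraph.count {G : Multigraph α β} (m l : ℤ) (H : Subgraph G) : ℤ :=
  2 * (H.freeV.card : ℤ) + m * (H.fixedV.card : ℤ) - l

/-- `(2,m,l)`-sparsity: every subgraph satisfies the count. -/
def Sparse (G : Multigraph α β) (m l : ℤ) : Prop :=
  ∀ H : Subgraph G, (H.E.card : ℤ) ≤ H.count m l

/-- The whole graph, as a subgraph of itself. -/
def top (G : Multigraph α β) : Subgraph G :=
  ⟨G.V, G.E, Finset.Subset.refl _, Finset.Subset.refl _, G.fst_mem, G.snd_mem⟩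

/-- `(2,m,l)`-tightness: sparsity together with equality for the whole graph. -/
def Tight (G : Multigraph α β) (m l : ℤ) : Prop :=
  G.Sparse m l ∧ (G.E.card : ℤ) = (G.top).count m l

/-- Adjacency via an edge of the given edge set. -/
def Adj (G : Multigraph α β) (ES : Finset β) (a b : α) : Prop :=
  ∃ e ∈ ES, (G.fst e = a ∧ G.snd e = b) ∨ (G.fst e = b ∧ G.snd e = a)

/-- Reachability using edges of the given edge set. -/
def Reach (G : Multigraph α β) (ES : Finset β) : α → α → Prop :=
  Relation.ReflTransGen (G.Adj ES)

/-- The connected component of a vertex in the (sub)graph `(VS, ES)`. -/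
noncomputable def componentOf (G : Multigraph α β) (VS : Finset α) (ES : Finset β) (v : α) :
    Finset α :=
  VS.filter (fun u => G.Reach ES u v)

/-- The set of connected components of the (sub)graph `(VS, ES)`. -/
noncomputable def components (G : Multigraph α β) (VS : Finset α) (ES : Finset β) :
    Finset (Finset α) :=
  VS.image (G.componentOf VS ES)

end Multigraph

/-- if G is (2,m,l)-sparse (0 ≤ m ≤ 2, 0 ≤ l ≤ 3) and v is a free vertex of
degree 3 with no incident loops, then G - v has no (2,m,l)-tight subgraph containing all
neighbours of v. -/
theorem statement3 {α β : Type*} [DecidableEq α] [DecidableEq β]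
    (G : Multigraph α β) (m l : ℤ)
    (hm0 : 0 ≤ m) (hm2 : m ≤ 2) (hl0 : 0 ≤ l) (hl3 : l ≤ 3)
    (v : α) (hv : v ∈ G.freeV) (hdeg : G.deg v = 3)
    (hnoloop : ∀ e ∈ G.E, ¬(G.fst e = v ∧ G.snd e = v))
    (hsparse : G.Sparse m l) :
    ¬ ∃ H : G.Subgraph, v ∉ H.V ∧
        (∀ e ∈ G.E, G.fst e = v → G.snd e ∈ H.V) ∧
        (∀ e ∈ G.E, G.snd e = v → G.fst e ∈ H.V) ∧
        (H.E.card : ℤ) = H.count m l := by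
  rintro ⟨H, hvH, hfst, hsnd, htight⟩
  have hvV : v ∈ G.V := (Finset.mem_sdiff.mp hv).1
  have hvfix : v ∉ G.fixed := (Finset.mem_sdiff.mp hv).2
  set I : Finset β := G.E.filter (fun e => G.fst e = v ∨ G.snd e = v) with hI
  have hIcard : I.card = 3 := by
    have hdisj : Disjoint (G.E.filter (fun e => G.fst e = v))
        (G.E.filter (fun e => G.snd e = v)) := by
      rw [Finset.disjoint_left]
      intro e he1 he2
      exact hnoloop e (Finset.mem_filter.mp he1).1
        ⟨(Finset.mem_filter.mp he1).2, (Finset.mem_filter.mp he2).2⟩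
    have hsplit : I = G.E.filter (fun e => G.fst e = v) ∪ G.E.filter (fun e => G.snd e = v) := by
      rw [hI, Finset.filter_or]
    rw [hsplit, Finset.card_union_of_disjoint hdisj]
    exact hdeg
  have hdisjE : Disjoint H.E I := by
    rw [Finset.disjoint_left]
    intro e heH heI
    rcases (Finset.mem_filter.mp heI).2 with h | h
    · exact hvH (h ▸ H.fst_mem e heH)
    · exact hvH (h ▸ H.snd_mem e heH)
  have hIsub : I ⊆ G.E := Finset.filter_subset _ _
  let H' : G.Subgraph :=
    { V := insert v H.V
      E := H.E ∪ I
      V_sub := Finset.insert_subset hvV H.V_sub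
      E_sub := Finset.union_subset H.E_sub hIsub
      fst_mem := by
        intro e he
        rcases Finset.mem_union.mp he with h | h
        · exact Finset.mem_insert_of_mem (H.fst_mem e h)
        · rcases (Finset.mem_filter.mp h).2 with h1 | h1
          · rw [h1]; exact Finset.mem_insert_self _ _
          · exact Finset.mem_insert_of_mem (hsnd e (Finset.mem_filter.mp h).1 h1)
      snd_mem := by
        intro e he
        rcases Finset.mem_union.mp he with h | h
        · exact Finset.mem_insert_of_mem (H.snd_mem e h)
        · rcases (Finset.mem_filter.mp h).2 with h1 | h1
          · exact Finset.mem_insert_of_mem (hfst e (Finset.mem_filter.mp h).1 h1)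
          · rw [h1]; exact Finset.mem_insert_self _ _ }
  have hEcard : H'.E.card = H.E.card + 3 := by
    show (H.E ∪ I).card = H.E.card + 3
    rw [Finset.card_union_of_disjoint hdisjE, hIcard]
  have hfree : H'.freeV = insert v H.freeV := by
    ext x
    simp only [H', Multigraph.Subgraph.freeV, Finset.mem_sdiff, Finset.mem_insert]
    constructor
    · rintro ⟨hx, hx2⟩
      rcases hx with rfl | hx
      · exact Or.inl rfl
      · exact Or.inr ⟨hx, hx2⟩
    · rintro (rfl | ⟨hx, hx2⟩)
      · exact ⟨Or.inl rfl, hvfix⟩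
      · exact ⟨Or.inr hx, hx2⟩
  have hfixed : H'.fixedV = H.fixedV := by
    ext x
    simp only [H', Multigraph.Subgraph.fixedV, Finset.mem_inter, Finset.mem_insert]
    constructor
    · rintro ⟨rfl | hx, hx2⟩
      · exact absurd hx2 hvfix
      · exact ⟨hx, hx2⟩
    · rintro ⟨hx, hx2⟩
      exact ⟨Or.inr hx, hx2⟩
  have hvnfree : v ∉ H.freeV := fun h => hvH (Finset.mem_sdiff.mp h).1
  have hfreecard : H'.freeV.card = H.freeV.card + 1 := by
    rw [hfree, Finset.card_insert_of_notMem hvnfree]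
  have hs := hsparse H'
  rw [Multigraph.Subgraph.count, hfreecard, hfixed, hEcard] at hs
  rw [Multigraph.Subgraph.count] at htight
  push_cast at hs
  linarith
end

section
/- Let Γ be a group and let (G,ψ) be a Γ-gain graph (a directed multigraph with edge labels in Γ and a free/fixed vertex partition). Let H₁, H₂ be connected subgraphs, each balanced (every cycle avoiding fixed vertices has gain id after removing fixed vertices and their incident edges). If the graph obtained from H₁ ∩ H₂ by deleting its fixed vertices is connected, then H₁ ∪ H₂ is balanced. -/
open scoped Classical

/-- A Γ-gain graph: a directed multigraph with edge gains in a group Γ and a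
distinguished set of fixed vertices. -/
structure GainGraph (α β Γ : Type*) [Group Γ] where
  V : Finset α
  E : Finset β
  tail : β → α
  head : β → α
  gain : β → Γ
  fixed : Finset α
  fixed_sub : fixed ⊆ V
  tail_mem : ∀ e ∈ E, tail e ∈ V
  head_mem : ∀ e ∈ E, head e ∈ V

set_option linter.unusedSectionVars false

namespace GainGraph

variable {α β Γ : Type*} [Group Γ] [DecidableEq α] [DecidableEq β]

/-- `IsWalkFrom G F a b w`: `w` is a walk from `a` to `b` using edges of `F`,
each traversed forwards (`true`) or backwards (`false`). -/
def IsWalkFrom (G : GainGraph α β Γ) (F : Finset β) : α → α → List (β × Bool) → Prop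
  | a, b, [] => a = b
  | a, b, (e, d) :: w => e ∈ F ∧
      (if d then G.tail e = a ∧ IsWalkFrom G F (G.head e) b w
       else G.head e = a ∧ IsWalkFrom G F (G.tail e) b w)

/-- The gain of a walk with respect to a gain function `ψ`. -/
def walkGain (ψ : β → Γ) (w : List (β × Bool)) : Γ :=
  (w.map (fun p => if p.2 then ψ p.1 else (ψ p.1)⁻¹)).prod

/-- An edge set `F` is balanced (w.r.t. the gain function `ψ`) if every closed walk in `F`
avoiding the fixed vertices has gain `id`. -/
def BalancedSet (G : GainGraph α β Γ) (ψ : β → Γ) (F : Finset β) : Prop :=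
  ∀ (v : α) (w : List (β × Bool)), G.IsWalkFrom F v v w →
    (∀ p ∈ w, G.tail p.1 ∉ G.fixed ∧ G.head p.1 ∉ G.fixed) → walkGain ψ w = 1

/-- A subgraph of a gain graph. -/
structure Subgraph (G : GainGraph α β Γ) where
  V : Finset α
  E : Finset β
  V_sub : V ⊆ G.V
  E_sub : E ⊆ G.E
  tail_mem : ∀ e ∈ E, G.tail e ∈ V
  head_mem : ∀ e ∈ E, G.head e ∈ V

/-- Adjacency via an edge of the given edge set (ignoring directions). -/
def Adj (G : GainGraph α β Γ) (F : Finset β) (a b : α) : Prop :=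
  ∃ e ∈ F, (G.tail e = a ∧ G.head e = b) ∨ (G.tail e = b ∧ G.head e = a)

/-- Connectivity of the (sub)graph with vertex set `VS` and edge set `F`. -/
def ConnectedOn (G : GainGraph α β Γ) (VS : Finset α) (F : Finset β) : Prop :=
  ∀ a ∈ VS, ∀ b ∈ VS, Relation.ReflTransGen (G.Adj F) a b

/-- Equivalence of gain functions, generated by switchings at free vertices and
relabellings of edges joining a fixed and a free vertex. -/
inductive GainEquiv (G : GainGraph α β Γ) : (β → Γ) → (β → Γ) → Prop
  | refl (ψ : β → Γ) : GainEquiv G ψ ψ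
  | switch (ψ : β → Γ) (v : α) (hv : v ∈ G.V) (hfree : v ∉ G.fixed) (γ : Γ) :
      GainEquiv G ψ (fun e =>
        if G.tail e = G.head e then ψ e
        else if G.tail e = v then γ * ψ e
        else if G.head e = v then ψ e * γ⁻¹
        else ψ e)
  | relabel (ψ : β → Γ) (e : β) (he : e ∈ G.E)
      (hfx : (G.tail e ∈ G.fixed ∧ G.head e ∉ G.fixed) ∨
             (G.tail e ∉ G.fixed ∧ G.head e ∈ G.fixed)) (γ : Γ) :
      GainEquiv G ψ (Function.update ψ e γ)
  | trans {ψ₁ ψ₂ ψ₃ : β → Γ} :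
      GainEquiv G ψ₁ ψ₂ → GainEquiv G ψ₂ ψ₃ → GainEquiv G ψ₁ ψ₃

/-- An edge set is a forest if every nonempty subset has more incident vertices than edges. -/
def IsForest (G : GainGraph α β Γ) (F : Finset β) : Prop :=
  ∀ F' ⊆ F, F'.Nonempty → F'.card < (F'.image G.tail ∪ F'.image G.head).card

end GainGraph
namespace GainGraph

variable {α β Γ : Type*} [Group Γ] [DecidableEq α] [DecidableEq β]
variable {G : GainGraph α β Γ} {F F' : Finset β} {a b c : α} {ψ : β → Γ}

lemma isWalkFrom_nil : G.IsWalkFrom F a b [] ↔ a = b := Iff.rfl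

lemma isWalkFrom_cons {e : β} {d : Bool} {w : List (β × Bool)} :
    G.IsWalkFrom F a b ((e, d) :: w) ↔ e ∈ F ∧
      (if d then G.tail e = a ∧ G.IsWalkFrom F (G.head e) b w
       else G.head e = a ∧ G.IsWalkFrom F (G.tail e) b w) := Iff.rfl

lemma isWalkFrom_cons_true {e : β} {w : List (β × Bool)} :
    G.IsWalkFrom F a b ((e, true) :: w) ↔
      e ∈ F ∧ G.tail e = a ∧ G.IsWalkFrom F (G.head e) b w := Iff.rfl

lemma isWalkFrom_cons_false {e : β} {w : List (β × Bool)} :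
    G.IsWalkFrom F a b ((e, false) :: w) ↔
      e ∈ F ∧ G.head e = a ∧ G.IsWalkFrom F (G.tail e) b w := Iff.rfl

lemma IsWalkFrom.append {w₁ w₂ : List (β × Bool)} (h₁ : G.IsWalkFrom F a b w₁)
    (h₂ : G.IsWalkFrom F b c w₂) : G.IsWalkFrom F a c (w₁ ++ w₂) := by
  induction w₁ generalizing a with
  | nil => rw [isWalkFrom_nil] at h₁; subst h₁; exact h₂
  | cons p w ih =>
    obtain ⟨e, d⟩ := p
    rw [isWalkFrom_cons] at h₁
    rw [List.cons_append, isWalkFrom_cons]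
    refine ⟨h₁.1, ?_⟩
    split_ifs with hd <;> simp only [hd] at h₁ <;>
      [exact ⟨h₁.2.1, ih h₁.2.2⟩; exact ⟨h₁.2.1, ih h₁.2.2⟩]

lemma IsWalkFrom.split {w₁ w₂ : List (β × Bool)} (h : G.IsWalkFrom F a c (w₁ ++ w₂)) :
    ∃ b, G.IsWalkFrom F a b w₁ ∧ G.IsWalkFrom F b c w₂ := by
  induction w₁ generalizing a with
  | nil => exact ⟨a, rfl, h⟩
  | cons p w ih =>
    obtain ⟨e, d⟩ := p
    rw [List.cons_append, isWalkFrom_cons] at h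
    by_cases hd : d <;> simp only [hd, if_true, if_false] at h
    · obtain ⟨m, hm1, hm2⟩ := ih h.2.2
      exact ⟨m, (isWalkFrom_cons).2 ⟨h.1, by simp [hd, h.2.1, hm1]⟩, hm2⟩
    · obtain ⟨m, hm1, hm2⟩ := ih h.2.2
      exact ⟨m, (isWalkFrom_cons).2 ⟨h.1, by simp [hd, h.2.1, hm1]⟩, hm2⟩

lemma IsWalkFrom.mem_of_mem {w : List (β × Bool)} (h : G.IsWalkFrom F a b w)
    {p : β × Bool} (hp : p ∈ w) : p.1 ∈ F := by
  induction w generalizing a with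
  | nil => cases hp
  | cons q w ih =>
    obtain ⟨e, d⟩ := q
    rw [isWalkFrom_cons] at h
    rcases List.mem_cons.1 hp with rfl | hp
    · exact h.1
    · by_cases hd : d <;> simp only [hd, if_true, if_false] at h
      · exact ih h.2.2 hp
      · exact ih h.2.2 hp

lemma IsWalkFrom.mono {w : List (β × Bool)} (h : G.IsWalkFrom F a b w)
    (hmem : ∀ p ∈ w, p.1 ∈ F') : G.IsWalkFrom F' a b w := by
  induction w generalizing a with
  | nil => exact h
  | cons q w ih =>
    obtain ⟨e, d⟩ := q
    rw [isWalkFrom_cons] at h ⊢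
    refine ⟨hmem _ (List.mem_cons_self), ?_⟩
    by_cases hd : d <;> simp only [hd, if_true, if_false] at h ⊢ <;>
      exact ⟨h.2.1, ih h.2.2 fun p hp => hmem p (List.mem_cons_of_mem _ hp)⟩

/-- reversal of a walk -/
def wrev (w : List (β × Bool)) : List (β × Bool) := (w.map fun p => (p.1, !p.2)).reverse

lemma mem_wrev {w : List (β × Bool)} {p : β × Bool} :
    p ∈ wrev w ↔ (p.1, !p.2) ∈ w := by
  obtain ⟨e, d⟩ := p
  simp only [wrev, List.mem_reverse, List.mem_map, Prod.mk.injEq]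
  constructor
  · rintro ⟨⟨a, b⟩, hab, rfl, h⟩
    cases b <;> cases d <;> simp_all
  · intro h; exact ⟨(e, !d), h, rfl, by cases d <;> rfl⟩

lemma isWalkFrom_single {e : β} {d : Bool} :
    G.IsWalkFrom F a b [(e, d)] ↔ e ∈ F ∧
      (if d then G.tail e = a ∧ G.head e = b else G.head e = a ∧ G.tail e = b) := by
  rw [isWalkFrom_cons]
  constructor <;> intro h <;> refine ⟨h.1, ?_⟩ <;> have := h.2 <;>
    split_ifs with hd <;> simp only [hd, if_true, if_false, isWalkFrom_nil] at this ⊢ <;>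
    exact this

lemma IsWalkFrom.wrev {w : List (β × Bool)} (h : G.IsWalkFrom F a b w) :
    G.IsWalkFrom F b a (wrev w) := by
  induction w generalizing a with
  | nil => rw [isWalkFrom_nil] at h; exact h.symm
  | cons q w ih =>
    obtain ⟨e, d⟩ := q
    rw [isWalkFrom_cons] at h
    have : GainGraph.wrev ((e,d) :: w) = GainGraph.wrev w ++ [(e, !d)] := by
      simp [GainGraph.wrev]
    rw [this]
    cases d <;> simp only [if_true, if_false, Bool.not_true, Bool.not_false] at h ⊢
    · exact (ih h.2.2).append ((isWalkFrom_single).2 ⟨h.1, by simp [h.2.1]⟩)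
    · exact (ih h.2.2).append ((isWalkFrom_single).2 ⟨h.1, by simp [h.2.1]⟩)

lemma walkGain_append {w₁ w₂ : List (β × Bool)} :
    walkGain ψ (w₁ ++ w₂) = walkGain ψ w₁ * walkGain (Γ := Γ) ψ w₂ := by
  simp [walkGain]

lemma walkGain_wrev {w : List (β × Bool)} :
    walkGain ψ (wrev w) = (walkGain (Γ := Γ) ψ w)⁻¹ := by
  induction w with
  | nil => simp [walkGain, wrev]
  | cons q w ih =>
    obtain ⟨e, d⟩ := q
    have : GainGraph.wrev ((e,d) :: w) = GainGraph.wrev w ++ [(e, !d)] := by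
      simp [GainGraph.wrev]
    rw [this, walkGain_append, ih]
    cases d <;> simp [walkGain]



lemma walks_same_gain (hbal : G.BalancedSet ψ F) {w₁ w₂ : List (β × Bool)}
    (h₁ : G.IsWalkFrom F a b w₁)
    (hf₁ : ∀ p ∈ w₁, G.tail p.1 ∉ G.fixed ∧ G.head p.1 ∉ G.fixed)
    (h₂ : G.IsWalkFrom F a b w₂)
    (hf₂ : ∀ p ∈ w₂, G.tail p.1 ∉ G.fixed ∧ G.head p.1 ∉ G.fixed) :
    walkGain ψ w₁ = walkGain ψ w₂ := by
  have hc : G.IsWalkFrom F a a (w₁ ++ wrev w₂) := h₁.append h₂.wrev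
  have hfc : ∀ p ∈ w₁ ++ wrev w₂, G.tail p.1 ∉ G.fixed ∧ G.head p.1 ∉ G.fixed := by
    intro p hp
    rcases List.mem_append.1 hp with hp | hp
    · exact hf₁ p hp
    · exact hf₂ (p.1, !p.2) (mem_wrev.1 hp)
  have := hbal a _ hc hfc
  rw [walkGain_append, walkGain_wrev] at this
  exact eq_of_mul_inv_eq_one this

lemma ConnectedOn.exists_walk {VS : Finset α} (h : G.ConnectedOn VS F)
    (ha : a ∈ VS) (hb : b ∈ VS) : ∃ w, G.IsWalkFrom F a b w := by
  have hr := h a ha b hb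
  clear ha hb
  induction hr with
  | refl => exact ⟨[], rfl⟩
  | tail _ hadj ih =>
    obtain ⟨w, hw⟩ := ih
    obtain ⟨e, he, hor⟩ := hadj
    rcases hor with ⟨ht, hh⟩ | ⟨ht, hh⟩
    · exact ⟨w ++ [(e, true)], hw.append (isWalkFrom_single.2 ⟨he, by simp [ht, hh]⟩)⟩
    · exact ⟨w ++ [(e, false)], hw.append (isWalkFrom_single.2 ⟨he, by simp [ht, hh]⟩)⟩

/-- the end vertex of a nonempty walk is an endpoint of one of its edges -/
lemma IsWalkFrom.end_mem {w : List (β × Bool)} (h : G.IsWalkFrom F a b w)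
    (hne : w ≠ []) : ∃ p ∈ w, G.tail p.1 = b ∨ G.head p.1 = b := by
  induction w generalizing a with
  | nil => exact absurd rfl hne
  | cons q w ih =>
    obtain ⟨e, d⟩ := q
    cases d
    · rw [isWalkFrom_cons_false] at h
      rcases w with _ | _
      · exact ⟨(e, false), by simp, Or.inl h.2.2⟩
      · obtain ⟨p, hp, hpb⟩ := ih h.2.2 (by simp)
        exact ⟨p, List.mem_cons_of_mem _ hp, hpb⟩
    · rw [isWalkFrom_cons_true] at h
      rcases w with _ | _
      · exact ⟨(e, true), by simp, Or.inr h.2.2⟩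
      · obtain ⟨p, hp, hpb⟩ := ih h.2.2 (by simp)
        exact ⟨p, List.mem_cons_of_mem _ hp, hpb⟩

/-- the start vertex of a nonempty walk is an endpoint of its first edge -/
lemma IsWalkFrom.start_mem {w : List (β × Bool)} (h : G.IsWalkFrom F a b w)
    (hne : w ≠ []) : ∃ p ∈ w, G.tail p.1 = a ∨ G.head p.1 = a := by
  rcases w with _ | ⟨⟨e, d⟩, w⟩
  · exact absurd rfl hne
  · cases d
    · rw [isWalkFrom_cons_false] at h
      exact ⟨(e, false), by simp, Or.inr h.2.1⟩
    · rw [isWalkFrom_cons_true] at h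
      exact ⟨(e, true), by simp, Or.inl h.2.1⟩

/-- find an adjacent differing pair in a list -/
lemma exists_cross {X : Type*} {l : List X} (p : X → Prop)
    (hx : ∃ a ∈ l, p a) (hy : ∃ b ∈ l, ¬ p b) :
    ∃ l₁ x y l₂, l = l₁ ++ x :: y :: l₂ ∧ ((p x ∧ ¬ p y) ∨ (¬ p x ∧ p y)) := by
  induction l with
  | nil => simp at hx
  | cons a t ih =>
    rcases t with _ | ⟨b, t'⟩
    · obtain ⟨x, hx, hpx⟩ := hx; obtain ⟨y, hy, hpy⟩ := hy
      simp at hx hy; subst hx; subst hy; exact absurd hpx hpy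
    · by_cases hab : (p a ∧ ¬ p b) ∨ (¬ p a ∧ p b)
      · exact ⟨[], a, b, t', rfl, hab⟩
      · push_neg at hab
        have hiff : p a ↔ p b := by tauto
        have hx' : ∃ x ∈ b :: t', p x := by
          obtain ⟨x, hx, hpx⟩ := hx
          rcases List.mem_cons.1 hx with rfl | hx
          · exact ⟨b, List.mem_cons_self, hiff.1 hpx⟩
          · exact ⟨x, hx, hpx⟩
        have hy' : ∃ y ∈ b :: t', ¬ p y := by
          obtain ⟨y, hy, hpy⟩ := hy
          rcases List.mem_cons.1 hy with rfl | hy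
          · exact ⟨b, List.mem_cons_self, fun h => hpy (hiff.2 h)⟩
          · exact ⟨y, hy, hpy⟩
        obtain ⟨l₁, x, y, l₂, heq, hc⟩ := ih hx' hy'
        exact ⟨a :: l₁, x, y, l₂, by rw [heq]; rfl, hc⟩


lemma IsWalkFrom.head_endpoint {q : β × Bool} {w : List (β × Bool)}
    (h : G.IsWalkFrom F a b (q :: w)) : G.tail q.1 = a ∨ G.head q.1 = a := by
  obtain ⟨e, d⟩ := q
  cases d
  · exact Or.inr (isWalkFrom_cons_false.1 h).2.1
  · exact Or.inl (isWalkFrom_cons_true.1 h).2.1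

lemma IsWalkFrom.concat_endpoint {q : β × Bool} {w : List (β × Bool)}
    (h : G.IsWalkFrom F a b (w ++ [q])) : G.tail q.1 = b ∨ G.head q.1 = b := by
  obtain ⟨c, _, hc⟩ := h.split
  obtain ⟨e, d⟩ := q
  rw [isWalkFrom_single] at hc
  cases d
  · simp only [Bool.false_eq_true, if_false] at hc
    exact Or.inl hc.2.2
  · simp only [if_true] at hc
    exact Or.inr hc.2.2

lemma ef_walk_e1 {H₁ H₂ : G.Subgraph} {u : List (β × Bool)}
    (hu : G.IsWalkFrom ((H₁.E ∩ H₂.E).filter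
      (fun e => G.tail e ∉ G.fixed ∧ G.head e ∉ G.fixed)) a b u) :
    G.IsWalkFrom H₁.E a b u :=
  hu.mono fun p hp => (Finset.mem_inter.1 (Finset.mem_filter.1 (hu.mem_of_mem hp)).1).1

lemma ef_walk_e2 {H₁ H₂ : G.Subgraph} {u : List (β × Bool)}
    (hu : G.IsWalkFrom ((H₁.E ∩ H₂.E).filter
      (fun e => G.tail e ∉ G.fixed ∧ G.head e ∉ G.fixed)) a b u) :
    G.IsWalkFrom H₂.E a b u :=
  hu.mono fun p hp => (Finset.mem_inter.1 (Finset.mem_filter.1 (hu.mem_of_mem hp)).1).2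

lemma ef_walk_free {H₁ H₂ : G.Subgraph} {u : List (β × Bool)}
    (hu : G.IsWalkFrom ((H₁.E ∩ H₂.E).filter
      (fun e => G.tail e ∉ G.fixed ∧ G.head e ∉ G.fixed)) a b u) :
    ∀ p ∈ u, G.tail p.1 ∉ G.fixed ∧ G.head p.1 ∉ G.fixed :=
  fun _ hp => (Finset.mem_filter.1 (hu.mem_of_mem hp)).2

variable (G) in
/-- Statement of the key induction: a walk of length at most `n` in `H₁ ∪ H₂` avoiding
fixed vertices with both endpoints in the free part of the intersection has the same
gain as any walk in the free part of the intersection with the same endpoints. -/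
def KeyStmt (n : ℕ) : Prop :=
  ∀ (H₁ H₂ : G.Subgraph),
    G.BalancedSet G.gain H₁.E → G.BalancedSet G.gain H₂.E →
    (∀ a ∈ (H₁.V ∩ H₂.V) \ G.fixed, ∀ b ∈ (H₁.V ∩ H₂.V) \ G.fixed,
      ∃ u, G.IsWalkFrom ((H₁.E ∩ H₂.E).filter
        (fun e => G.tail e ∉ G.fixed ∧ G.head e ∉ G.fixed)) a b u) →
    ∀ (w : List (β × Bool)) (a b : α), w.length ≤ n →
      G.IsWalkFrom (H₁.E ∪ H₂.E) a b w →
      (∀ p ∈ w, G.tail p.1 ∉ G.fixed ∧ G.head p.1 ∉ G.fixed) →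
      a ∈ (H₁.V ∩ H₂.V) \ G.fixed → b ∈ (H₁.V ∩ H₂.V) \ G.fixed →
      ∀ u, G.IsWalkFrom ((H₁.E ∩ H₂.E).filter
        (fun e => G.tail e ∉ G.fixed ∧ G.head e ∉ G.fixed)) a b u →
      walkGain G.gain w = walkGain G.gain u

lemma key_block (G : GainGraph α β Γ) (n : ℕ) (IH : KeyStmt G n)
    (H₁ H₂ : G.Subgraph)
    (hbal1 : G.BalancedSet G.gain H₁.E) (hbal2 : G.BalancedSet G.gain H₂.E)
    (hcw : ∀ a ∈ (H₁.V ∩ H₂.V) \ G.fixed, ∀ b ∈ (H₁.V ∩ H₂.V) \ G.fixed,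
      ∃ u, G.IsWalkFrom ((H₁.E ∩ H₂.E).filter
        (fun e => G.tail e ∉ G.fixed ∧ G.head e ∉ G.fixed)) a b u)
    (w : List (β × Bool)) (a b : α) (hlen : w.length ≤ n + 1)
    (hw : G.IsWalkFrom (H₁.E ∪ H₂.E) a b w)
    (hfree : ∀ p ∈ w, G.tail p.1 ∉ G.fixed ∧ G.head p.1 ∉ G.fixed)
    (ha : a ∈ (H₁.V ∩ H₂.V) \ G.fixed) (hb : b ∈ (H₁.V ∩ H₂.V) \ G.fixed)
    (u : List (β × Bool))
    (hu : G.IsWalkFrom ((H₁.E ∩ H₂.E).filter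
        (fun e => G.tail e ∉ G.fixed ∧ G.head e ∉ G.fixed)) a b u)
    (hne : w ≠ []) (hhd : (w.head hne).1 ∈ H₁.E)
    (hnot : ∃ p ∈ w, p.1 ∉ H₁.E) :
    walkGain G.gain w = walkGain G.gain u := by
  classical
  set P : β × Bool → Bool := fun p => decide (p.1 ∈ H₁.E) with hP
  set t := w.takeWhile P with ht
  set r := w.dropWhile P with hrdef
  have hwsplit : t ++ r = w := List.takeWhile_append_dropWhile
  have hrne : r ≠ [] := by
    intro h
    rw [hrdef, List.dropWhile_eq_nil_iff] at h
    obtain ⟨p, hpw, hp⟩ := hnot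
    exact hp (by simpa [hP] using h p hpw)
  obtain ⟨p₀, r', hr⟩ := List.exists_cons_of_ne_nil hrne
  have hp₀f : P p₀ = false := by
    have h5 := List.head_dropWhile_not P (l := w) (by rw [← hrdef]; exact hrne)
    simp only [← hrdef, hr, List.head_cons] at h5
    exact h5
  have hp₀1 : p₀.1 ∉ H₁.E := by simpa [hP] using hp₀f
  have htne : t ≠ [] := by
    obtain ⟨q, w', hqw⟩ := List.exists_cons_of_ne_nil hne
    have hq : P q = true := by
      subst hqw; simpa [hP] using hhd
    rw [ht, hqw, List.takeWhile_cons_of_pos hq]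
    simp
  have hmemw : ∀ p ∈ w, p.1 ∈ H₁.E ∪ H₂.E := fun p hp => hw.mem_of_mem hp
  rw [← hwsplit] at hw
  obtain ⟨m, hwt, hwr⟩ := hw.split
  have hp₀w : p₀ ∈ w := by
    rw [← hwsplit, hr]; exact List.mem_append_right _ (List.mem_cons_self)
  have hp₀2 : p₀.1 ∈ H₂.E := by
    rcases Finset.mem_union.1 (hmemw _ hp₀w) with h | h
    · exact absurd h hp₀1
    · exact h
  rw [hr] at hwr
  have hm2 : G.tail p₀.1 = m ∨ G.head p₀.1 = m := hwr.head_endpoint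
  have hmV2 : m ∈ H₂.V := by
    rcases hm2 with h | h
    · exact h ▸ H₂.tail_mem _ hp₀2
    · exact h ▸ H₂.head_mem _ hp₀2
  have hmfix : m ∉ G.fixed := by
    rcases hm2 with h | h
    · exact h ▸ (hfree _ hp₀w).1
    · exact h ▸ (hfree _ hp₀w).2
  have hmV1 : m ∈ H₁.V := by
    obtain ⟨p, hpt, hp⟩ := hwt.end_mem htne
    have hp1 : p.1 ∈ H₁.E := by
      have := List.mem_takeWhile_imp (ht ▸ hpt)
      simpa [hP] using this
    rcases hp with h | h
    · exact h ▸ H₁.tail_mem _ hp1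
    · exact h ▸ H₁.head_mem _ hp1
  have hm : m ∈ (H₁.V ∩ H₂.V) \ G.fixed :=
    Finset.mem_sdiff.2 ⟨Finset.mem_inter.2 ⟨hmV1, hmV2⟩, hmfix⟩
  obtain ⟨u₁, hu₁⟩ := hcw a ha m hm
  obtain ⟨u₂, hu₂⟩ := hcw m hm b hb
  have htmem : ∀ p ∈ t, p ∈ w := fun p hp => by
    rw [← hwsplit]; exact List.mem_append_left _ hp
  have hrmem : ∀ p ∈ p₀ :: r', p ∈ w := fun p hp => by
    rw [← hwsplit, hr]; exact List.mem_append_right _ hp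
  have hgt : walkGain G.gain t = walkGain G.gain u₁ :=
    walks_same_gain hbal1
      (hwt.mono fun p hp => by
        have := List.mem_takeWhile_imp (ht ▸ hp)
        simpa [hP] using this)
      (fun p hp => hfree p (htmem p hp))
      (ef_walk_e1 hu₁) (ef_walk_free hu₁)
  have hlenr : (p₀ :: r').length ≤ n := by
    have h1 : t.length + r.length = w.length := by
      rw [← hwsplit, List.length_append]
    have h2 : 1 ≤ t.length := by
      rcases t with _ | _
      · exact absurd rfl htne
      · simp
    have h3 : r.length = (p₀ :: r').length := by rw [hr]
    omega
  have hgr : walkGain G.gain (p₀ :: r') = walkGain G.gain u₂ :=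
    IH H₁ H₂ hbal1 hbal2 hcw (p₀ :: r') m b hlenr hwr
      (fun p hp => hfree p (hrmem p hp)) hm hb u₂ hu₂
  have hgu : walkGain G.gain u = walkGain G.gain (u₁ ++ u₂) :=
    walks_same_gain hbal1 (ef_walk_e1 hu) (ef_walk_free hu)
      (ef_walk_e1 (hu₁.append hu₂)) (ef_walk_free (hu₁.append hu₂))
  calc walkGain G.gain w = walkGain G.gain t * walkGain G.gain r := by
        rw [← hwsplit, walkGain_append]
    _ = walkGain G.gain u₁ * walkGain G.gain u₂ := by
        rw [hgt, hr, hgr]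
    _ = walkGain G.gain (u₁ ++ u₂) := walkGain_append.symm
    _ = walkGain G.gain u := hgu.symm

lemma key (G : GainGraph α β Γ) : ∀ n, KeyStmt G n := by
  intro n
  induction n with
  | zero =>
    intro H₁ H₂ hbal1 _ _ w a b hlen hw hfree _ _ u hu
    have hw0 : w = [] := List.eq_nil_of_length_eq_zero (Nat.le_zero.1 hlen)
    subst hw0
    exact walks_same_gain hbal1 (show G.IsWalkFrom H₁.E a b [] from hw) (by simp)
      (ef_walk_e1 hu) (ef_walk_free hu)
  | succ n IH =>
    intro H₁ H₂ hbal1 hbal2 hcw w a b hlen hw hfree ha hb u hu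
    by_cases hall1 : ∀ p ∈ w, p.1 ∈ H₁.E
    · exact walks_same_gain hbal1 (hw.mono hall1) hfree (ef_walk_e1 hu) (ef_walk_free hu)
    by_cases hall2 : ∀ p ∈ w, p.1 ∈ H₂.E
    · exact walks_same_gain hbal2 (hw.mono hall2) hfree (ef_walk_e2 hu) (ef_walk_free hu)
    push_neg at hall1 hall2
    obtain ⟨p₁, hp₁w, hp₁⟩ := hall1
    obtain ⟨p₂, hp₂w, hp₂⟩ := hall2
    have hne : w ≠ [] := by rintro rfl; simp at hp₁w
    by_cases hhd : (w.head hne).1 ∈ H₁.E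
    · exact key_block G n IH H₁ H₂ hbal1 hbal2 hcw w a b hlen hw hfree ha hb u hu hne hhd
        ⟨p₁, hp₁w, hp₁⟩
    · have hhd2 : (w.head hne).1 ∈ H₂.E := by
        rcases Finset.mem_union.1 (hw.mem_of_mem (List.head_mem hne)) with h | h
        · exact absurd h hhd
        · exact h
      have hS : (H₂.V ∩ H₁.V) \ G.fixed = (H₁.V ∩ H₂.V) \ G.fixed := by
        rw [Finset.inter_comm]
      have hE : (H₂.E ∩ H₁.E).filter (fun e => G.tail e ∉ G.fixed ∧ G.head e ∉ G.fixed)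
          = (H₁.E ∩ H₂.E).filter (fun e => G.tail e ∉ G.fixed ∧ G.head e ∉ G.fixed) := by
        rw [Finset.inter_comm]
      exact key_block G n IH H₂ H₁ hbal2 hbal1 (by rw [hS, hE]; exact hcw) w a b hlen
        (by rw [Finset.union_comm]; exact hw) hfree (by rw [hS]; exact ha)
        (by rw [hS]; exact hb) u (by rw [hE]; exact hu) hne hhd2 ⟨p₂, hp₂w, hp₂⟩

end GainGraph

/-- if H₁, H₂ are connected balanced subgraphs of a Γ-gain graph and the graph
obtained from H₁ ∩ H₂ by deleting the fixed vertices is connected, then H₁ ∪ H₂ is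
balanced. -/
theorem statement4 {α β Γ : Type*} [Group Γ] [DecidableEq α] [DecidableEq β]
    (G : GainGraph α β Γ) (H₁ H₂ : G.Subgraph)
    (hconn1 : G.ConnectedOn H₁.V H₁.E) (hconn2 : G.ConnectedOn H₂.V H₂.E)
    (hbal1 : G.BalancedSet G.gain H₁.E) (hbal2 : G.BalancedSet G.gain H₂.E)
    (hconn : G.ConnectedOn ((H₁.V ∩ H₂.V) \ G.fixed)
        ((H₁.E ∩ H₂.E).filter (fun e => G.tail e ∉ G.fixed ∧ G.head e ∉ G.fixed))) :
    G.BalancedSet G.gain (H₁.E ∪ H₂.E) := by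
  intro v w hw hfree
  have hcw : ∀ a ∈ (H₁.V ∩ H₂.V) \ G.fixed, ∀ b ∈ (H₁.V ∩ H₂.V) \ G.fixed,
      ∃ u, G.IsWalkFrom ((H₁.E ∩ H₂.E).filter
        (fun e => G.tail e ∉ G.fixed ∧ G.head e ∉ G.fixed)) a b u :=
    fun a ha b hb => hconn.exists_walk ha hb
  by_cases hall1 : ∀ p ∈ w, p.1 ∈ H₁.E
  · exact hbal1 v w (hw.mono hall1) hfree
  by_cases hall2 : ∀ p ∈ w, p.1 ∈ H₂.E
  · exact hbal2 v w (hw.mono hall2) hfree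
  push_neg at hall1 hall2
  obtain ⟨p₁, hp₁w, hp₁⟩ := hall1
  obtain ⟨p₂, hp₂w, hp₂⟩ := hall2
  have hp₂1 : p₂.1 ∈ H₁.E := by
    rcases Finset.mem_union.1 (hw.mem_of_mem hp₂w) with h | h
    · exact h
    · exact absurd h hp₂
  obtain ⟨l₁, x, y, l₂, hsplit, hcase⟩ :=
    GainGraph.exists_cross (fun p : β × Bool => p.1 ∈ H₁.E) ⟨p₂, hp₂w, hp₂1⟩ ⟨p₁, hp₁w, hp₁⟩
  have hsplit' : w = (l₁ ++ [x]) ++ (y :: l₂) := by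
    rw [hsplit]; simp
  have hxw : x ∈ w := by rw [hsplit]; simp
  have hyw : y ∈ w := by rw [hsplit]; simp
  rw [hsplit'] at hw
  obtain ⟨m, hm1, hm2⟩ := hw.split
  have hmx : G.tail x.1 = m ∨ G.head x.1 = m := hm1.concat_endpoint
  have hmy : G.tail y.1 = m ∨ G.head y.1 = m := hm2.head_endpoint
  have hmfix : m ∉ G.fixed := by
    rcases hmx with h | h
    · exact h ▸ (hfree _ hxw).1
    · exact h ▸ (hfree _ hxw).2
  have hmem1 : ∀ p : β × Bool, p ∈ w → p.1 ∈ H₁.E → (G.tail p.1 = m ∨ G.head p.1 = m) →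
      m ∈ H₁.V := by
    rintro p _ hp (h | h)
    · exact h ▸ H₁.tail_mem _ hp
    · exact h ▸ H₁.head_mem _ hp
  have hmem2 : ∀ p : β × Bool, p ∈ w → p.1 ∉ H₁.E → (G.tail p.1 = m ∨ G.head p.1 = m) →
      m ∈ H₂.V := by
    rintro p hpw hp h
    have hp2 : p.1 ∈ H₂.E := by
      rcases Finset.mem_union.1 ((hsplit' ▸ hw).mem_of_mem hpw) with h' | h'
      · exact absurd h' hp
      · exact h'
    rcases h with h | h
    · exact h ▸ H₂.tail_mem _ hp2
    · exact h ▸ H₂.head_mem _ hp2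
  have hm : m ∈ (H₁.V ∩ H₂.V) \ G.fixed := by
    refine Finset.mem_sdiff.2 ⟨Finset.mem_inter.2 ?_, hmfix⟩
    rcases hcase with ⟨hx1, hy1⟩ | ⟨hx1, hy1⟩
    · exact ⟨hmem1 x hxw hx1 hmx, hmem2 y hyw hy1 hmy⟩
    · exact ⟨hmem1 y hyw hy1 hmy, hmem2 x hxw hx1 hmx⟩
  have hrot : G.IsWalkFrom (H₁.E ∪ H₂.E) m m ((y :: l₂) ++ (l₁ ++ [x])) := hm2.append hm1
  have hfree' : ∀ p ∈ (y :: l₂) ++ (l₁ ++ [x]),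
      G.tail p.1 ∉ G.fixed ∧ G.head p.1 ∉ G.fixed := by
    intro p hp
    apply hfree
    rw [hsplit']
    rcases List.mem_append.1 hp with h | h
    · exact List.mem_append_right _ h
    · exact List.mem_append_left _ h
  have hnil : G.IsWalkFrom ((H₁.E ∩ H₂.E).filter
      (fun e => G.tail e ∉ G.fixed ∧ G.head e ∉ G.fixed)) m m [] := rfl
  have hkey := GainGraph.key G ((y :: l₂) ++ (l₁ ++ [x])).length H₁ H₂ hbal1 hbal2 hcw
    _ m m le_rfl hrot hfree' hm hm [] hnil
  rw [GainGraph.walkGain_append] at hkey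
  have h1 : GainGraph.walkGain G.gain ((y :: l₂)) * GainGraph.walkGain G.gain (l₁ ++ [x]) = 1 := by
    simpa [GainGraph.walkGain] using hkey
  rw [hsplit', GainGraph.walkGain_append]
  rw [mul_eq_one_iff_eq_inv] at h1 ⊢
  rw [h1, inv_inv]
end

section
/- Let ω = exp(2πi/k) for an integer k ≥ 2, let 0 ≤ j ≤ k−1 and 1 ≤ t ≤ k−1, and let α = 2πt/k. Define the 2×2 complex matrix A with entries A₁₁ = A₂₂ = (1−cos α)(1+ω^{jt}) and A₁₂ = −A₂₁ = sin(α)(1−ω^{jt}). If A is the zero matrix, then t = k/2 (so k is even) and j is odd. -/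
open Complex

/-- with ω = exp(2πi/k), α = 2πt/k, if the matrix A with entries
A₁₁ = A₂₂ = (1-cos α)(1+ω^{jt}) and A₁₂ = -A₂₁ = sin(α)(1-ω^{jt}) is zero, then
t = k/2 (so k is even) and j is odd. -/
theorem statement8 (k : ℕ) (hk : 2 ≤ k) (j t : ℕ) (hj : j ≤ k - 1)
    (ht1 : 1 ≤ t) (htk : t ≤ k - 1) :
    letI ω : ℂ := Complex.exp (2 * (Real.pi : ℂ) * Complex.I / (k : ℂ))
    letI α : ℝ := 2 * Real.pi * (t : ℝ) / (k : ℝ)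
    letI A : Matrix (Fin 2) (Fin 2) ℂ :=
      !![(1 - (Real.cos α : ℂ)) * (1 + ω ^ (j * t)),
         (Real.sin α : ℂ) * (1 - ω ^ (j * t));
         -((Real.sin α : ℂ) * (1 - ω ^ (j * t))),
         (1 - (Real.cos α : ℂ)) * (1 + ω ^ (j * t))]
    A = 0 → k = 2 * t ∧ Odd j := by
  intro hA
  set ω : ℂ := Complex.exp (2 * (Real.pi : ℂ) * Complex.I / (k : ℂ)) with hω
  set α : ℝ := 2 * Real.pi * (t : ℝ) / (k : ℝ) with hαdef
  have hπ := Real.pi_pos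
  have hk0 : (0:ℝ) < k := by positivity
  have ht0 : (0:ℝ) < t := by exact_mod_cast ht1
  have htlt : (t:ℝ) < k := by
    have : t < k := lt_of_le_of_lt htk (Nat.sub_lt (by omega) one_pos)
    exact_mod_cast this
  have hα0 : 0 < α := by
    rw [hαdef]; positivity
  have hα2 : α < 2 * Real.pi := by
    rw [hαdef, div_lt_iff₀ hk0]
    nlinarith
  have h00 : (1 - (Real.cos α : ℂ)) * (1 + ω ^ (j * t)) = 0 := by
    have := congrFun (congrFun hA 0) 0
    simpa using this
  have h01 : (Real.sin α : ℂ) * (1 - ω ^ (j * t)) = 0 := by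
    have := congrFun (congrFun hA 0) 1
    simpa using this
  have hcos : Real.cos α ≠ 1 := by
    intro h
    have := (Real.cos_eq_one_iff_of_lt_of_lt (by linarith) (by linarith)).mp h
    linarith
  have hc : (1 - (Real.cos α : ℂ)) ≠ 0 := by
    intro h
    apply hcos
    have : (Real.cos α : ℂ) = 1 := by linear_combination -h
    exact_mod_cast this
  have hωpow : ω ^ (j * t) = -1 := by
    rcases mul_eq_zero.mp h00 with h | h
    · exact absurd h hc
    · linear_combination h
  have hsin : Real.sin α = 0 := by
    rw [hωpow] at h01
    have h2 : (Real.sin α : ℂ) * 2 = 0 := by linear_combination h01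
    have h3 := (mul_eq_zero.mp h2).resolve_right (by norm_num)
    exact_mod_cast h3
  have hαπ : α = Real.pi := by
    rcases Real.sin_eq_zero_iff.mp hsin with ⟨n, hn⟩
    have hn1 : n = 1 := by
      have h1 : (0:ℝ) < n * Real.pi := by rw [hn]; exact hα0
      have h2 : (n:ℝ) * Real.pi < 2 * Real.pi := by rw [hn]; exact hα2
      have hn0 : 0 < n := by
        by_contra h; push_neg at h
        have : (n:ℝ) ≤ 0 := by exact_mod_cast h
        nlinarith
      have hnlt : n < 2 := by
        by_contra h; push_neg at h
        have : (2:ℝ) ≤ n := by exact_mod_cast h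
        nlinarith
      omega
    rw [← hn, hn1]; push_cast; ring
  have hkt : k = 2 * t := by
    have h1 : 2 * Real.pi * t = Real.pi * k := by
      rw [hαdef] at hαπ
      field_simp at hαπ
      linear_combination Real.pi * hαπ
    have h2 : (k:ℝ) = 2 * t := by
      have := mul_left_cancel₀ (ne_of_gt hπ) (by linarith : Real.pi * k = Real.pi * (2 * t))
      linarith
    exact_mod_cast h2
  refine ⟨hkt, ?_⟩
  have htne : (t:ℂ) ≠ 0 := by exact_mod_cast (by positivity : (0:ℝ) < t).ne'
  have hpow : ω ^ (j * t) = (-1 : ℂ) ^ j := by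
    rw [hω, ← Complex.exp_nat_mul, ← Complex.exp_pi_mul_I, ← Complex.exp_nat_mul]
    congr 1
    rw [hkt]
    push_cast
    field_simp
  rw [hpow] at hωpow
  rcases Nat.even_or_odd j with he | ho
  · exfalso
    rw [he.neg_one_pow] at hωpow
    norm_num at hωpow
  · exact ho
end

section
/- With the same setup: ω = exp(2πi/k), k ≥ 3, 1 ≤ t ≤ k−1, α = 2πt/k, and A the matrix with A₁₁ = A₂₂ = (1−cos α)(1+ω^{jt}), A₁₂ = −A₂₁ = sin(α)(1−ω^{jt}). Suppose additionally that if k is even and j is odd then t ≠ k/2. If A is a scalar multiple of the identity matrix I₂, then ω^{jt} = 1, i.e. k divides j·t; moreover in that case j ∉ {1, k−1}. -/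
open Complex

/-- with ω = exp(2πi/k), k ≥ 3, 1 ≤ t ≤ k-1, α = 2πt/k, and A as before,
assuming t ≠ k/2 whenever k is even and j is odd: if A is a scalar multiple of the
identity, then ω^{jt} = 1 (equivalently k ∣ j·t), and moreover j ∉ {1, k-1}. -/
theorem statement9 (k : ℕ) (hk : 3 ≤ k) (j t : ℕ) (hj : j ≤ k - 1)
    (ht1 : 1 ≤ t) (htk : t ≤ k - 1)
    (hcond : Even k → Odd j → 2 * t ≠ k) :
    letI ω : ℂ := Complex.exp (2 * (Real.pi : ℂ) * Complex.I / (k : ℂ))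
    letI α : ℝ := 2 * Real.pi * (t : ℝ) / (k : ℝ)
    letI A : Matrix (Fin 2) (Fin 2) ℂ :=
      !![(1 - (Real.cos α : ℂ)) * (1 + ω ^ (j * t)),
         (Real.sin α : ℂ) * (1 - ω ^ (j * t));
         -((Real.sin α : ℂ) * (1 - ω ^ (j * t))),
         (1 - (Real.cos α : ℂ)) * (1 + ω ^ (j * t))]
    (∃ c : ℂ, A = c • (1 : Matrix (Fin 2) (Fin 2) ℂ)) →
      ω ^ (j * t) = 1 ∧ k ∣ j * t ∧ j ≠ 1 ∧ j ≠ k - 1 := by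
  intro h
  obtain ⟨c, hc⟩ := h
  set ω : ℂ := Complex.exp (2 * (Real.pi : ℂ) * Complex.I / (k : ℂ)) with hωdef
  set α : ℝ := 2 * Real.pi * (t : ℝ) / (k : ℝ) with hαdef
  have hk0 : (k : ℕ) ≠ 0 := by omega
  have hprim : IsPrimitiveRoot ω k := Complex.isPrimitiveRoot_exp k hk0
  have hkR : (0:ℝ) < k := by positivity
  have htlt : t < k := by omega
  -- off-diagonal entry is zero
  have hoff : (Real.sin α : ℂ) * (1 - ω ^ (j * t)) = 0 := by
    have := congrFun (congrFun hc 0) 1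
    simpa [Matrix.smul_apply, Matrix.one_apply] using this
  -- main: ω^(j*t) = 1
  have hω1 : ω ^ (j * t) = 1 := by
    rcases mul_eq_zero.mp hoff with hs | hz
    · -- sin α = 0 ⟹ 2t = k, k even, j even
      have hsR : Real.sin α = 0 := by exact_mod_cast hs
      obtain ⟨n, hn⟩ := Real.sin_eq_zero_iff.mp hsR
      have hα : α = 2 * Real.pi * t / k := hαdef
      have hpi : Real.pi ≠ 0 := Real.pi_ne_zero
      have h2t : 2 * t = k := by
        have h1 : (n : ℝ) * k = 2 * t := by
          have hk' : (k:ℝ) ≠ 0 := ne_of_gt hkR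
          field_simp [hα] at hn
          have hnk : (n:ℝ) * Real.pi * k = 2 * Real.pi * t := by
            rw [hn, hα]; field_simp
          have e : Real.pi * ((n:ℝ) * k - 2 * t) = 0 := by linear_combination hnk
          rcases mul_eq_zero.mp e with h | h
          · exact absurd h hpi
          · linarith
        have hn1 : n = 1 := by
          have h0 : (0:ℝ) < 2 * t := by positivity
          have h2 : (2:ℝ) * t < 2 * k := by exact_mod_cast (by omega : 2*t < 2*k)
          have hlb : (0:ℝ) < (n:ℝ) := by
            rcases lt_trichotomy (n:ℝ) 0 with h|h|h
            · nlinarith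
            · nlinarith
            · exact h
          have hub : (n:ℝ) < 2 := by nlinarith
          have : (0:ℤ) < n := by exact_mod_cast hlb
          have : n < 2 := by exact_mod_cast hub
          omega
        have : (1:ℝ) * k = 2 * t := by rw [← h1, hn1]; norm_num
        exact_mod_cast (by linarith : (2*t:ℝ) = k)
      have hkeven : Even k := ⟨t, by omega⟩
      have hjeven : Even j := by
        by_contra hodd
        exact hcond hkeven (Nat.not_even_iff_odd.mp hodd) h2t
      obtain ⟨m, hm⟩ := hjeven
      have hdvd : k ∣ j * t := ⟨m, by rw [hm, ← h2t]; ring⟩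
      exact hprim.pow_eq_one_iff_dvd _ |>.mpr hdvd
    · have : ω ^ (j*t) = 1 := by linear_combination -hz
      exact this
  have hdvd : k ∣ j * t := (hprim.pow_eq_one_iff_dvd _).mp hω1
  refine ⟨hω1, hdvd, ?_, ?_⟩
  · rintro rfl
    rw [one_mul] at hdvd
    have := Nat.le_of_dvd (by omega) hdvd
    omega
  · rintro rfl
    have hcop : Nat.Coprime k (k - 1) :=
      (Nat.coprime_self_sub_right (by omega)).mpr (Nat.coprime_one_right _)
    have hdt := hcop.dvd_of_dvd_mul_left hdvd
    have := Nat.le_of_dvd (by omega) hdt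
    omega
end
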